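/- Let G be a countable discrete group, let χ be a character on G, and let g ∈ G. If there exists an infinite sequence (gₙ) of pairwise distinct elements, each conjugate to g, such that χ(gₙ⁻¹gₘ) = 0 for all n ≠ m, then χ(g) = 0. -/

import Mathlib

open scoped BigOperators ComplexOrder

/-- A character on a group `G`: a normalized, conjugation-invariant,
positive definite complex-valued function. -/
def IsCharacter {G : Type*} [Group G] (χ : G → ℂ) : Prop :=
  χ 1 = 1 ∧ (∀ g h : G, χ (h * g * h⁻¹) = χ g) ∧
    ∀ (n : ℕ) (g : Fin n → G) (α : Fin n → ℂ),
      0 ≤ ∑ i, ∑ j, (starRingEnd ℂ) (α i) * α j * χ ((g i)⁻¹ * g j)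

lemma char_inv {G : Type*} [Group G] (χ : G → ℂ) (hχ : IsCharacter χ) (x : G) :
    χ x⁻¹ = (starRingEnd ℂ) (χ x) := by
  have key : ∀ t : ℂ, 0 ≤ 1 + t * χ x + (starRingEnd ℂ) t * χ x⁻¹ +
      (starRingEnd ℂ) t * t := by
    intro t
    have h := hχ.2.2 2 ![1, x] ![1, t]
    simpa [Fin.sum_univ_two, hχ.1, mul_comm, mul_assoc, add_assoc] using h
  have h1 := key 1
  have hI := key Complex.I
  rw [Complex.le_def] at h1 hI
  have e1 : (χ x).im + (χ x⁻¹).im = 0 := by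
    have := h1.2
    simp [Complex.add_im, Complex.mul_im] at this
    linarith
  have e2 : (χ x).re - (χ x⁻¹).re = 0 := by
    have := hI.2
    simp [Complex.add_im, Complex.mul_im, Complex.mul_re] at this
    linarith
  apply Complex.ext
  · simp only [Complex.conj_re]; linarith
  · simp only [Complex.conj_im]; linarith

theorem character_vanishes_of_orthogonal_conjugates
    {G : Type*} [Group G] [Countable G] (χ : G → ℂ) (hχ : IsCharacter χ) (g : G)
    (f : ℕ → G) (hinj : Function.Injective f)
    (hconj : ∀ n, IsConj g (f n))
    (horth : ∀ n m : ℕ, n ≠ m → χ ((f n)⁻¹ * f m) = 0) :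
    χ g = 0 := by
  set c := χ g with hc
  have hfc : ∀ n : ℕ, χ (f n) = c := by
    intro n
    obtain ⟨u, hu⟩ := isConj_iff.mp (hconj n)
    rw [← hu, hχ.2.1]
  have hfcinv : ∀ n : ℕ, χ (f n)⁻¹ = (starRingEnd ℂ) c := by
    intro n
    rw [char_inv χ hχ, hfc]
  have key : ∀ n : ℕ, (n : ℝ) ^ 2 * ‖c‖ ^ 2 ≤ n := by
    intro n
    have h := hχ.2.2 (n + 1) (Fin.cons 1 (fun i : Fin n => f i))
      (Fin.cons (-(n : ℂ) * c) (fun _ => 1))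
    have hd : ∀ x : Fin n, (∑ y : Fin n, χ ((f (x : ℕ))⁻¹ * f (y : ℕ))) = 1 := by
      intro x
      have he : ∀ y : Fin n, χ ((f (x : ℕ))⁻¹ * f (y : ℕ)) =
          if x = y then 1 else 0 := by
        intro y
        by_cases hxy : (x : ℕ) = (y : ℕ)
        · have : x = y := Fin.ext hxy
          subst this
          simp [hχ.1]
        · rw [horth x y hxy]
          simp [Fin.ext_iff, hxy]
      rw [Finset.sum_congr rfl (fun y _ => he y)]
      simp
    have hcalc : (∑ i : Fin (n+1), ∑ j : Fin (n+1),
        (starRingEnd ℂ) ((Fin.cons (-(n : ℂ) * c) (fun _ => 1) : Fin (n+1) → ℂ) i) *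
          (Fin.cons (-(n : ℂ) * c) (fun _ => 1) : Fin (n+1) → ℂ) j *
          χ (((Fin.cons 1 (fun i : Fin n => f i) : Fin (n+1) → G) i)⁻¹ *
            (Fin.cons 1 (fun i : Fin n => f i) : Fin (n+1) → G) j)) =
        (n : ℂ) - (n : ℂ)^2 * ((starRingEnd ℂ) c * c) := by
      simp only [Fin.sum_univ_succ, Fin.cons_zero, Fin.cons_succ, map_one, map_mul,
        map_neg, Complex.conj_natCast, inv_one, one_mul, mul_one, hχ.1, hfc, hfcinv]
      simp only [hd]
      simp only [Finset.sum_const, Finset.card_univ, Fintype.card_fin, nsmul_eq_mul]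
      ring
    rw [hcalc] at h
    have habs : (starRingEnd ℂ) c * c = ((‖c‖ ^ 2 : ℝ) : ℂ) := by
      rw [← Complex.normSq_eq_conj_mul_self]
      norm_cast
      exact (Complex.sq_norm c).symm
    rw [habs] at h
    rw [show ((n:ℂ) - (n:ℂ)^2 * ((‖c‖ ^ 2 : ℝ) : ℂ)) =
        (((n:ℝ) - (n:ℝ)^2 * ‖c‖ ^ 2 : ℝ) : ℂ) from by push_cast; ring] at h
    rw [Complex.zero_le_real] at h
    linarith
  by_contra hne
  have hpos : 0 < ‖c‖ ^ 2 := pow_pos (norm_pos_iff.mpr hne) 2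
  obtain ⟨n, hn⟩ := exists_nat_gt (1 / (‖c‖ ^ 2))
  have hn1 : (1 : ℝ) < n * ‖c‖ ^ 2 := by
    rw [div_lt_iff₀ hpos] at hn
    linarith [hn]
  have := key n
  have hng : (0:ℝ) < n := by
    by_contra h0
    push_neg at h0
    have : (n:ℝ) = 0 := le_antisymm h0 (Nat.cast_nonneg n)
    rw [this] at hn1; linarith
  nlinarith [this, hn1, hng]
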